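/- The map Φ_b sending a blue arrow (i,j) ∈ N_b (with i ∈ D, j ∈ U_D, 0 ≤ g(j)−g(i) < a, and j strictly northwest of i) to the cell c at the intersection of the row of i and the column of j is a bijection from N_b onto the set D_b = {c ∈ D : (leg_D(c)+1)/arm_D(c) ≤ a/b} of blue cells (where the inequality is interpreted as b(leg_D(c)+1) ≤ a·arm_D(c), with the convention that it fails when arm_D(c) = 0). -/
import Mathlib


def g (a b : ℤ) (p : ℤ × ℤ) : ℤ := a * b - a * p.1 - b * p.2

def Gset (a b : ℤ) : Set (ℤ × ℤ) := {p | 1 ≤ p.1 ∧ 1 ≤ p.2 ∧ 0 < g a b p}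

def IsSubdiagram (a b : ℤ) (D : Set (ℤ × ℤ)) : Prop :=
  D ⊆ Gset a b ∧ ∀ p ∈ D, ∀ q ∈ Gset a b, q.1 ≤ p.1 → q.2 ≤ p.2 → q ∈ D

def U (D : Set (ℤ × ℤ)) : Set (ℤ × ℤ) :=
  {p | p ∉ D ∧ ((p.1, p.2 - 1) ∈ D ∨ (1 ≤ p.1 ∧ p.2 - 1 ≤ 0))}

/-- arm_D(c) = max {k : c − ka ∈ D}, where a acts as the vector (−1,0). -/
noncomputable def arm (D : Set (ℤ × ℤ)) (c : ℤ × ℤ) : ℕ :=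
  sSup {k : ℕ | (c.1 + (k : ℤ), c.2) ∈ D}

/-- leg_D(c) = max {k : c − kb ∈ D}, where b acts as the vector (0,−1). -/
noncomputable def leg (D : Set (ℤ × ℤ)) (c : ℤ × ℤ) : ℕ :=
  sSup {k : ℕ | (c.1, c.2 + (k : ℤ)) ∈ D}

section helpers

variable {a b : ℤ} {D : Set (ℤ × ℤ)}

lemma down_closed (ha : 1 ≤ a) (hb : 1 ≤ b) (hD : IsSubdiagram a b D)
    {p : ℤ × ℤ} (hp : p ∈ D) {q : ℤ × ℤ} (h1 : 1 ≤ q.1) (h2 : 1 ≤ q.2)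
    (hx : q.1 ≤ p.1) (hy : q.2 ≤ p.2) : q ∈ D := by
  refine hD.2 p hp q ⟨h1, h2, ?_⟩ hx hy
  have hG := (hD.1 hp).2.2
  simp only [g] at hG ⊢
  nlinarith

lemma arm_spec (ha : 1 ≤ a) (hb : 1 ≤ b) (hD : IsSubdiagram a b D)
    {c : ℤ × ℤ} (hc : c ∈ D) :
    (c.1 + (arm D c : ℤ), c.2) ∈ D ∧ ∀ k : ℕ, (c.1 + (k : ℤ), c.2) ∈ D → k ≤ arm D c := by
  have hbdd : BddAbove {k : ℕ | (c.1 + (k : ℤ), c.2) ∈ D} := by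
    refine ⟨b.toNat, fun k hk => ?_⟩
    have hG := hD.1 hk
    have hc1 := (hD.1 hc).1
    have hc2 := (hD.1 hc).2.1
    simp only [Gset, g, Set.mem_setOf_eq] at hG
    have hk0 : (0 : ℤ) ≤ (k : ℤ) := Int.natCast_nonneg k
    have : (k : ℤ) ≤ b.toNat := by
      rw [Int.toNat_of_nonneg (by linarith)]
      nlinarith [hG.2.2]
    exact_mod_cast this
  have hne : {k : ℕ | (c.1 + (k : ℤ), c.2) ∈ D}.Nonempty := ⟨0, by simpa using hc⟩
  exact ⟨Nat.sSup_mem hne hbdd, fun k hk => le_csSup hbdd hk⟩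

lemma leg_spec (ha : 1 ≤ a) (hb : 1 ≤ b) (hD : IsSubdiagram a b D)
    {c : ℤ × ℤ} (hc : c ∈ D) :
    (c.1, c.2 + (leg D c : ℤ)) ∈ D ∧ ∀ k : ℕ, (c.1, c.2 + (k : ℤ)) ∈ D → k ≤ leg D c := by
  have hbdd : BddAbove {k : ℕ | (c.1, c.2 + (k : ℤ)) ∈ D} := by
    refine ⟨a.toNat, fun k hk => ?_⟩
    have hG := hD.1 hk
    have hc1 := (hD.1 hc).1
    have hc2 := (hD.1 hc).2.1
    simp only [Gset, g, Set.mem_setOf_eq] at hG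
    have hk0 : (0 : ℤ) ≤ (k : ℤ) := Int.natCast_nonneg k
    have : (k : ℤ) ≤ a.toNat := by
      rw [Int.toNat_of_nonneg (by linarith)]
      nlinarith [hG.2.2]
    exact_mod_cast this
  have hne : {k : ℕ | (c.1, c.2 + (k : ℤ)) ∈ D}.Nonempty := ⟨0, by simpa using hc⟩
  exact ⟨Nat.sSup_mem hne hbdd, fun k hk => le_csSup hbdd hk⟩

/-- integer version of the upper bound for arm -/
lemma arm_le_int (ha : 1 ≤ a) (hb : 1 ≤ b) (hD : IsSubdiagram a b D)
    {c : ℤ × ℤ} (hc : c ∈ D) {k : ℤ} (hk0 : 0 ≤ k) (hk : (c.1 + k, c.2) ∈ D) :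
    k ≤ (arm D c : ℤ) := by
  have h := (arm_spec ha hb hD hc).2 k.toNat
    (by rwa [Int.toNat_of_nonneg hk0])
  calc k = (k.toNat : ℤ) := (Int.toNat_of_nonneg hk0).symm
  _ ≤ (arm D c : ℤ) := by exact_mod_cast h

lemma leg_le_int (ha : 1 ≤ a) (hb : 1 ≤ b) (hD : IsSubdiagram a b D)
    {c : ℤ × ℤ} (hc : c ∈ D) {k : ℤ} (hk0 : 0 ≤ k) (hk : (c.1, c.2 + k) ∈ D) :
    k ≤ (leg D c : ℤ) := by
  have h := (leg_spec ha hb hD hc).2 k.toNat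
    (by rwa [Int.toNat_of_nonneg hk0])
  calc k = (k.toNat : ℤ) := (Int.toNat_of_nonneg hk0).symm
  _ ≤ (leg D c : ℤ) := by exact_mod_cast h

/-- membership of any smaller offset in the row -/
lemma row_mem (ha : 1 ≤ a) (hb : 1 ≤ b) (hD : IsSubdiagram a b D)
    {c : ℤ × ℤ} (hc : c ∈ D) {k : ℤ} (hk0 : 0 ≤ k) (hk : k ≤ (arm D c : ℤ)) :
    (c.1 + k, c.2) ∈ D := by
  have hm := (arm_spec ha hb hD hc).1
  have hc1 := (hD.1 hc).1
  have hc2 := (hD.1 hc).2.1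
  exact down_closed ha hb hD hm (by simp; linarith) (by simpa using hc2)
    (by simp; linarith) (by simp)

lemma col_mem (ha : 1 ≤ a) (hb : 1 ≤ b) (hD : IsSubdiagram a b D)
    {c : ℤ × ℤ} (hc : c ∈ D) {k : ℤ} (hk0 : 0 ≤ k) (hk : k ≤ (leg D c : ℤ)) :
    (c.1, c.2 + k) ∈ D := by
  have hm := (leg_spec ha hb hD hc).1
  have hc1 := (hD.1 hc).1
  have hc2 := (hD.1 hc).2.1
  exact down_closed ha hb hD hm (by simpa using hc1) (by simp; linarith)
    (by simp) (by simp; linarith)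

/-- For an arrow (i,j) in N_b, the image cell c = (j.1, i.2) is in D and its leg
is exactly j.2 - i.2 - 1. -/
lemma arrow_basic (ha : 1 < a) (hab : a < b) (hD : IsSubdiagram a b D)
    {i j : ℤ × ℤ} (hi : i ∈ D) (hj : j ∈ U D)
    (hx : j.1 < i.1) (hy : i.2 < j.2) :
    (j.1, i.2) ∈ D ∧ (leg D (j.1, i.2) : ℤ) = j.2 - i.2 - 1 := by
  have ha1 : (1:ℤ) ≤ a := le_of_lt ha
  have hb1 : (1:ℤ) ≤ b := by linarith
  have hi1 := (hD.1 hi).1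
  have hi2 := (hD.1 hi).2.1
  -- j.2 - 1 ≥ i.2 ≥ 1, so the U-alternative "bottom row" is impossible
  have hjd : (j.1, j.2 - 1) ∈ D := by
    rcases hj.2 with h | h
    · exact h
    · exfalso; linarith [h.2]
  have hj1 : 1 ≤ j.1 := (hD.1 hjd).1
  have hcD : (j.1, i.2) ∈ D :=
    down_closed ha1 hb1 hD hjd (by simpa using hj1) (by simpa using hi2)
      (by simp) (by simp; linarith)
  refine ⟨hcD, ?_⟩
  have hle : j.2 - 1 - i.2 ≤ (leg D (j.1, i.2) : ℤ) := by
    apply leg_le_int ha1 hb1 hD hcD (by linarith)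
    show (j.1, i.2 + (j.2 - 1 - i.2)) ∈ D
    rw [show i.2 + (j.2 - 1 - i.2) = j.2 - 1 from by ring]
    exact hjd
  have hlt : (leg D (j.1, i.2) : ℤ) < j.2 - i.2 := by
    by_contra hcon
    push_neg at hcon
    have : (j.1, i.2 + (j.2 - i.2)) ∈ D :=
      col_mem ha1 hb1 hD hcD (by linarith) hcon
    simp only [show i.2 + (j.2 - i.2) = j.2 by ring] at this
    exact hj.1 this
  omega

end helpers

/-- Φ_b : (i,j) ↦ (column of j, row of i) is a bijection from the
set N_b of blue arrows onto D_b = {c ∈ D : b(leg_D(c)+1) ≤ a·arm_D(c)}. -/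
theorem stmt7 (a b : ℤ) (ha : 1 < a) (hab : a < b) (hcop : IsCoprime a b)
    (D : Set (ℤ × ℤ)) (hD : IsSubdiagram a b D) :
    Set.BijOn (fun p : (ℤ × ℤ) × (ℤ × ℤ) => (p.2.1, p.1.2))
      {p : (ℤ × ℤ) × (ℤ × ℤ) | p.1 ∈ D ∧ p.2 ∈ U D ∧
        0 ≤ g a b p.2 - g a b p.1 ∧ g a b p.2 - g a b p.1 < a ∧
        p.2.1 < p.1.1 ∧ p.1.2 < p.2.2}
      {c : ℤ × ℤ | c ∈ D ∧ b * ((leg D c : ℤ) + 1) ≤ a * (arm D c : ℤ)} := by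
  have ha1 : (1:ℤ) ≤ a := le_of_lt ha
  have hb1 : (1:ℤ) ≤ b := by linarith
  refine ⟨?_, ?_, ?_⟩
  · -- MapsTo
    rintro ⟨i, j⟩ ⟨hi, hj, hg0, hga, hx, hy⟩
    obtain ⟨hcD, hleg⟩ := arrow_basic ha hab hD hi hj hx hy
    refine ⟨hcD, ?_⟩
    have harm : i.1 - j.1 ≤ (arm D (j.1, i.2) : ℤ) := by
      apply arm_le_int ha1 hb1 hD hcD (by linarith)
      show (j.1 + (i.1 - j.1), i.2) ∈ D
      rw [show j.1 + (i.1 - j.1) = i.1 from by ring]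
      exact hi
    have hgeq : g a b j - g a b i = a * (i.1 - j.1) - b * (j.2 - i.2) := by
      simp only [g]; ring
    simp only [hleg]
    nlinarith [hg0, harm]
  · -- InjOn
    rintro ⟨⟨ix, iy⟩, ⟨jx, jy⟩⟩ ⟨hi, hj, hg0, hga, hx, hy⟩
      ⟨⟨ix', iy'⟩, ⟨jx', jy'⟩⟩ ⟨hi', hj', hg0', hga', hx', hy'⟩ heq
    simp only [Prod.mk.injEq] at heq ⊢
    obtain ⟨hj1, hi2⟩ := heq
    obtain ⟨hcD, hleg⟩ := arrow_basic ha hab hD hi hj hx hy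
    obtain ⟨hcD', hleg'⟩ := arrow_basic ha hab hD hi' hj' hx' hy'
    dsimp only at hleg hleg' hg0 hga hg0' hga' hx hx' hy hy'
    subst hj1 hi2
    have hj2 : jy = jy' := by omega
    subst hj2
    simp only [g] at hg0 hga hg0' hga'
    have key : a * (ix - ix') = (a * b - a * jx - b * jy - (a * b - a * ix - b * iy))
        - (a * b - a * jx - b * jy - (a * b - a * ix' - b * iy)) := by ring
    have h1 : a * (ix - ix') < a := by linarith
    have h2 : -a < a * (ix - ix') := by linarith
    have hii : ix = ix' := by
      rcases lt_trichotomy ix ix' with h | h | h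
      · have : a * (ix - ix') ≤ a * (-1) := by
          apply mul_le_mul_of_nonneg_left (by omega) (by linarith)
        linarith
      · exact h
      · have : a * 1 ≤ a * (ix - ix') := by
          apply mul_le_mul_of_nonneg_left (by omega) (by linarith)
        linarith
    exact ⟨⟨hii, rfl⟩, rfl, rfl⟩
  · -- SurjOn
    rintro c ⟨hc, hineq⟩
    set L : ℤ := (leg D c : ℤ) with hL
    set A : ℤ := (arm D c : ℤ) with hA
    have hL0 : 0 ≤ L := Int.natCast_nonneg _
    have hA0 : 0 ≤ A := Int.natCast_nonneg _
    set n : ℤ := b * (L + 1) with hn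
    have hn0 : 0 < n := by positivity
    -- choose m = ⌈n/a⌉
    obtain ⟨m, hm1, hm2⟩ : ∃ m : ℤ, n ≤ a * m ∧ a * m < n + a := by
      rcases eq_or_ne (n % a) 0 with h0 | h0
      · refine ⟨n / a, ?_, ?_⟩
        · rw [Int.mul_ediv_cancel' (Int.dvd_of_emod_eq_zero h0)]
        · rw [Int.mul_ediv_cancel' (Int.dvd_of_emod_eq_zero h0)]; linarith
      · have hmod : 0 < n % a := lt_of_le_of_ne (Int.emod_nonneg n (by linarith)) (Ne.symm h0)
        have hmodlt : n % a < a := Int.emod_lt_of_pos n (by linarith)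
        have hdiv : n = a * (n / a) + n % a := (Int.mul_ediv_add_emod n a).symm
        exact ⟨n / a + 1, by linarith [hdiv], by linarith [hdiv]⟩
    have hm0 : 1 ≤ m := by nlinarith
    have hmA : m ≤ A := by nlinarith
    have hc1 := (hD.1 hc).1
    have hc2 := (hD.1 hc).2.1
    refine ⟨⟨(c.1 + m, c.2), (c.1, c.2 + L + 1)⟩, ⟨?_, ⟨?_, ?_⟩, ?_, ?_, ?_, ?_⟩, ?_⟩
    · exact row_mem ha1 hb1 hD hc (by linarith) hmA
    · -- j ∉ D
      intro hmem
      have : L + 1 ≤ L := leg_le_int ha1 hb1 hD hc (by linarith)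
        (by simpa [add_assoc] using hmem)
      linarith
    · left
      have := col_mem ha1 hb1 hD hc hL0 (le_refl L)
      simpa [show c.2 + L + 1 - 1 = c.2 + L by ring] using this
    · simp only [g]; push_cast; nlinarith
    · simp only [g]; push_cast; nlinarith
    · simp; linarith
    · simp; linarith
    · simp
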